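/- Fix η > 0 and let w : (0,∞) → ℝ be antitone with 0 < w(γ) ≤ 1 for all γ, such that γ ↦ w(γ)/(1+γ) is integrable on (0,∞). Then the function g(β) = β · ∫₀^∞ w(γ) e^{-βγ/η}/(1+γ) dγ is strictly concave on (0,∞). -/

import Mathlib

open MeasureTheory Real Set

lemma intA {η β : ℝ} (hη : 0 < η) (hβ : 0 < β) :
    IntegrableOn (fun γ => Real.exp (-β * γ / η) / (1 + γ)) (Set.Ioi 0) := by
  have hb : 0 < β / η := div_pos hβ hη
  refine Integrable.mono (exp_neg_integrableOn_Ioi 0 hb) ?_ ?_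
  · exact ((measurable_exp.comp ((measurable_id.const_mul (-β)).div_const η)).div
      (measurable_const.add measurable_id)).aestronglyMeasurable
  · filter_upwards [ae_restrict_mem measurableSet_Ioi] with γ hγ
    have h1 : (0:ℝ) < 1 + γ := by linarith [mem_Ioi.mp hγ]
    have : -β * γ / η = -(β/η * γ) := by ring
    rw [Real.norm_eq_abs, Real.norm_eq_abs, abs_of_pos (exp_pos _), abs_of_pos
      (div_pos (exp_pos _) h1), this]
    calc Real.exp (-(β/η*γ)) / (1+γ) ≤ Real.exp (-(β/η*γ)) / 1 :=
          div_le_div_of_nonneg_left (exp_pos _).le one_pos (by linarith [mem_Ioi.mp hγ])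
      _ = Real.exp (-(β/η)*γ) := by rw [div_one]; ring_nf

lemma intB {η β : ℝ} (hη : 0 < η) (hβ : 0 < β) {w : ℝ → ℝ}
    (hwpos : ∀ γ ∈ Set.Ioi (0 : ℝ), 0 < w γ)
    (hint : IntegrableOn (fun γ => w γ / (1 + γ)) (Set.Ioi 0)) :
    IntegrableOn (fun γ => w γ * Real.exp (-β * γ / η) / (1 + γ)) (Set.Ioi 0) := by
  refine Integrable.mono hint ?_ ?_
  · exact (hint.aestronglyMeasurable.mul
      (measurable_exp.comp ((measurable_id.const_mul (-β)).div_const η)).aestronglyMeasurable.restrict).congr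
      (by filter_upwards with γ; simp [Function.comp]; ring)
  · filter_upwards [ae_restrict_mem measurableSet_Ioi] with γ hγ
    have hγ0 : (0:ℝ) < γ := mem_Ioi.mp hγ
    have h1 : (0:ℝ) < 1 + γ := by linarith
    have he : Real.exp (-β * γ / η) ≤ 1 := by
      rw [Real.exp_le_one_iff]
      have h2 : 0 < β * γ / η := div_pos (mul_pos hβ hγ0) hη
      have : -β * γ / η = -(β * γ / η) := by ring
      linarith [this ▸ (neg_nonpos.mpr h2.le : -(β*γ/η) ≤ 0)]
    have hwp := hwpos γ hγ
    rw [Real.norm_eq_abs, Real.norm_eq_abs, abs_of_nonneg (by positivity), abs_of_nonneg (by positivity)]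
    rw [div_le_div_iff₀ h1 h1]
    nlinarith [mul_le_mul_of_nonneg_left he (by positivity : (0:ℝ) ≤ w γ * (1 + γ))]

lemma intD {η β : ℝ} (hη : 0 < η) (hβ : 0 < β) :
    IntegrableOn (fun t => Real.exp (-t) * (β / (β + η * t))) (Set.Ioi 0) := by
  refine Integrable.mono (exp_neg_integrableOn_Ioi 0 one_pos) ?_ ?_
  · exact ((measurable_exp.comp measurable_neg).mul
      ((measurable_const.add (measurable_id.const_mul η)).const_div β)).aestronglyMeasurable
  · filter_upwards [ae_restrict_mem measurableSet_Ioi] with t ht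
    have ht0 : (0:ℝ) < t := mem_Ioi.mp ht
    have hd : (0:ℝ) < β + η * t := by positivity
    have h1 : β / (β + η * t) ≤ 1 := (div_le_one hd).mpr (by nlinarith)
    rw [Real.norm_eq_abs, Real.norm_eq_abs, abs_of_nonneg (by positivity),
      abs_of_pos (exp_pos _), show (-1:ℝ)*t = -t by ring]
    nlinarith [exp_pos (-t), mul_le_mul_of_nonneg_left h1 (exp_pos (-t)).le]

lemma covC {η β : ℝ} (hη : 0 < η) (hβ : 0 < β) :
    ∫ γ in Set.Ioi (0:ℝ), β * (Real.exp (-β * γ / η) / (1 + γ))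
      = η * ∫ t in Set.Ioi (0:ℝ), Real.exp (-t) * (β / (β + η * t)) := by
  have hb : 0 < β / η := div_pos hβ hη
  set g : ℝ → ℝ := fun t => Real.exp (-t) * (β / (β + η * t)) with hg
  have key : ∫ γ in Set.Ioi (0:ℝ), g (β / η * γ) = (β/η)⁻¹ • ∫ t in Set.Ioi ((β/η) * 0), g t :=
    integral_comp_mul_left_Ioi g 0 hb
  rw [mul_zero] at key
  have congr1 : ∫ γ in Set.Ioi (0:ℝ), β * (Real.exp (-β * γ / η) / (1 + γ))
      = β * ∫ γ in Set.Ioi (0:ℝ), g (β / η * γ) := by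
    rw [← integral_const_mul]
    refine setIntegral_congr_fun measurableSet_Ioi (fun γ hγ => ?_)
    have hγ0 : (0:ℝ) < γ := hγ
    have h1 : (0:ℝ) < 1 + γ := by linarith
    have hd : (0:ℝ) < β + η * (β / η * γ) := by positivity
    simp only [hg]
    rw [show -(β/η*γ) = -β*γ/η by ring]
    rw [show β / (β + η * (β / η * γ)) = 1 / (1+γ) by
      rw [div_eq_div_iff hd.ne' h1.ne']; field_simp]
    ring
  rw [congr1, key, smul_eq_mul]
  field_simp

lemma algE {s a b p q : ℝ} (hs : 0 < s) (ha : 0 < a) (hb : 0 < b) (hab : a ≠ b)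
    (hp : 0 < p) (hq : 0 < q) (hpq : p + q = 1) :
    p * (a / (a + s)) + q * (b / (b + s)) < (p * a + q * b) / ((p * a + q * b) + s) := by
  have h1 : 0 < a + s := by linarith
  have h2 : 0 < b + s := by linarith
  have h3 : 0 < (p * a + q * b) + s := by nlinarith
  rw [show p * (a / (a + s)) + q * (b / (b + s)) = (p*a*(b+s) + q*b*(a+s))/((a+s)*(b+s)) by
    field_simp]
  rw [div_lt_div_iff₀ (by positivity) h3]
  have hab' : a - b ≠ 0 := sub_ne_zero.mpr hab
  have key : 0 < p * q * s * (a - b)^2 := by positivity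
  have id : (p*a+q*b) * ((a+s)*(b+s)) - (p*a*(b+s) + q*b*(a+s)) * ((p*a+q*b)+s)
      = p*q*s*(a-b)^2 := by
    linear_combination (-(((p*a+q*b)*a*b + s*(p*a^2+q*b^2))))*hpq
  linarith

lemma lemF {η a b p q : ℝ} (hη : 0 < η) (ha : 0 < a) (hb : 0 < b) (hab : a ≠ b)
    (hp : 0 < p) (hq : 0 < q) (hpq : p + q = 1) :
    p * (∫ γ in Set.Ioi (0:ℝ), a * (Real.exp (-a * γ / η) / (1 + γ)))
      + q * (∫ γ in Set.Ioi (0:ℝ), b * (Real.exp (-b * γ / η) / (1 + γ)))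
      < ∫ γ in Set.Ioi (0:ℝ), (p*a+q*b) * (Real.exp (-(p*a+q*b) * γ / η) / (1 + γ)) := by
  have hm : 0 < p*a+q*b := by positivity
  rw [covC hη ha, covC hη hb, covC hη hm]
  rw [← mul_assoc, ← mul_assoc, mul_comm p η, mul_comm q η, mul_assoc, mul_assoc, ← mul_add]
  refine mul_lt_mul_of_pos_left ?_ hη
  set Va := ∫ t in Set.Ioi (0:ℝ), Real.exp (-t) * (a / (a + η * t)) with hVa
  set Vb := ∫ t in Set.Ioi (0:ℝ), Real.exp (-t) * (b / (b + η * t)) with hVb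
  set Vm := ∫ t in Set.Ioi (0:ℝ), Real.exp (-t) * ((p*a+q*b) / ((p*a+q*b) + η * t)) with hVm
  have hIa := intD hη ha
  have hIb := intD hη hb
  have hIm := intD hη hm
  have hsum : IntegrableOn (fun t => p * (Real.exp (-t) * (a / (a + η * t)))
      + q * (Real.exp (-t) * (b / (b + η * t)))) (Set.Ioi 0) :=
    (hIa.const_mul p).add (hIb.const_mul q)
  have hdiff : Vm - (p * Va + q * Vb) = ∫ t in Set.Ioi (0:ℝ),
      (Real.exp (-t) * ((p*a+q*b) / ((p*a+q*b) + η * t))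
        - (p * (Real.exp (-t) * (a / (a + η * t))) + q * (Real.exp (-t) * (b / (b + η * t))))) := by
    rw [integral_sub hIm hsum, integral_add (hIa.const_mul p) (hIb.const_mul q),
      integral_const_mul, integral_const_mul]
  have hFint : IntegrableOn (fun t => Real.exp (-t) * ((p*a+q*b) / ((p*a+q*b) + η * t))
      - (p * (Real.exp (-t) * (a / (a + η * t))) + q * (Real.exp (-t) * (b / (b + η * t)))))
      (Set.Ioi 0) := hIm.sub hsum
  have hae : 0 ≤ᵐ[volume.restrict (Set.Ioi 0)] (fun t => Real.exp (-t) * ((p*a+q*b) / ((p*a+q*b) + η * t))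
      - (p * (Real.exp (-t) * (a / (a + η * t))) + q * (Real.exp (-t) * (b / (b + η * t))))) := by
    filter_upwards [ae_restrict_mem measurableSet_Ioi] with t ht
    have ht0 : (0:ℝ) < t := ht
    have hs : 0 < η * t := by positivity
    have halg := algE hs ha hb hab hp hq hpq
    have he := exp_pos (-t)
    simp only [Pi.zero_apply]
    nlinarith [halg]
  have hpos : 0 < Vm - (p * Va + q * Vb) := by
    rw [hdiff]
    rw [setIntegral_pos_iff_support_of_nonneg_ae hae hFint]
    have hsub : Set.Ioi (0:ℝ) ⊆ (Function.support (fun t => Real.exp (-t) * ((p*a+q*b) / ((p*a+q*b) + η * t))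
      - (p * (Real.exp (-t) * (a / (a + η * t))) + q * (Real.exp (-t) * (b / (b + η * t)))))) ∩ Set.Ioi 0 := by
      intro t ht
      refine ⟨?_, ht⟩
      have ht0 : (0:ℝ) < t := ht
      have hs : 0 < η * t := by positivity
      have halg := algE hs ha hb hab hp hq hpq
      have he := exp_pos (-t)
      simp only [Function.mem_support]
      intro hcontra
      nlinarith [halg]
    exact lt_of_lt_of_le (by simp [Real.volume_Ioi]) (measure_mono hsub)
  linarith

lemma crossing {η a b p q : ℝ} (hη : 0 < η) (ha : 0 < a) (hab : a < b)
    (hp : 0 < p) (hq : 0 < q) (hpq : p + q = 1) :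
    ∃ γ₀ : ℝ, 0 < γ₀ ∧
      (∀ γ, 0 < γ → γ ≤ γ₀ → 0 ≤ (p*a+q*b) * Real.exp (-(p*a+q*b) * γ / η)
          - p*(a * Real.exp (-a * γ / η)) - q*(b * Real.exp (-b * γ / η))) ∧
      (∀ γ, γ₀ ≤ γ → (p*a+q*b) * Real.exp (-(p*a+q*b) * γ / η)
          - p*(a * Real.exp (-a * γ / η)) - q*(b * Real.exp (-b * γ / η)) ≤ 0) := by
  have hb : 0 < b := ha.trans hab
  set m : ℝ := p*a+q*b with hm
  have hm0 : 0 < m := by positivity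
  have hα : 0 < m - a := by nlinarith
  have hδ : m - b < 0 := by nlinarith
  set φ : ℝ → ℝ := fun c => m - p*a*Real.exp ((m-a)*c) - q*b*Real.exp ((m-b)*c) with hφ
  have hφ0 : φ 0 = 0 := by simp [hφ]; linarith
  -- strict concavity two-point inequality
  have expCombo : ∀ (α x z lam mu : ℝ), α ≠ 0 → x < z → 0 < lam → 0 < mu → lam + mu = 1 →
      Real.exp (α*(lam*x+mu*z)) < lam*Real.exp (α*x) + mu*Real.exp (α*z) := by
    intro α x z lam mu hα0 hxz hlam hmu hsum
    have hne : α*x ≠ α*z := fun h => hxz.ne (mul_left_cancel₀ hα0 h)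
    have := strictConvexOn_exp.2 (Set.mem_univ (α*x)) (Set.mem_univ (α*z)) hne hlam hmu hsum
    simp only [smul_eq_mul] at this
    have h2 : α*(lam*x+mu*z) = lam*(α*x)+mu*(α*z) := by ring
    rw [h2]; exact this
  have key : ∀ x z lam mu : ℝ, x < z → 0 < lam → 0 < mu → lam + mu = 1 →
      lam * φ x + mu * φ z < φ (lam*x+mu*z) := by
    intro x z lam mu hxz hlam hmu hsum
    have h1 := expCombo (m-a) x z lam mu hα.ne' hxz hlam hmu hsum
    have h2 := expCombo (m-b) x z lam mu hδ.ne hxz hlam hmu hsum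
    have h1' := mul_lt_mul_of_pos_left h1 (by positivity : (0:ℝ) < p*a)
    have h2' := mul_lt_mul_of_pos_left h2 (by positivity : (0:ℝ) < q*b)
    simp only [hφ]
    nlinarith [h1', h2']
  -- derivative at 0 is positive
  have hda : HasDerivAt (fun c : ℝ => (m-a)*c) (m-a) 0 := by
    simpa using (hasDerivAt_id (0:ℝ)).const_mul (m-a)
  have hdb : HasDerivAt (fun c : ℝ => (m-b)*c) (m-b) 0 := by
    simpa using (hasDerivAt_id (0:ℝ)).const_mul (m-b)
  have hd : HasDerivAt φ (-(p*a*(m-a)) - q*b*(m-b)) 0 := by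
    have := ((hasDerivAt_const (0:ℝ) m).sub ((hda.exp).const_mul (p*a))).sub
      ((hdb.exp).const_mul (q*b))
    have e : (-(p*a*(m-a)) - q*b*(m-b)) = 0 - p * a * (Real.exp ((m - a) * 0) * (m - a)) - q * b * (Real.exp ((m - b) * 0) * (m - b)) := by simp
    rw [e]; exact this
  have hd0 : 0 < -(p*a*(m-a)) - q*b*(m-b) := by
    simp only [hm]
    have hne : a - b ≠ 0 := sub_ne_zero.mpr hab.ne
    have id : -(p*a*(p*a+q*b-a)) - q*b*(p*a+q*b-b) = p*q*(a-b)^2 := by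
      linear_combination (-(p*a^2+q*b^2))*hpq
    rw [id]; positivity
  -- find c₁ > 0 with φ c₁ > 0
  obtain ⟨c₁, hc₁pos, hφc₁⟩ : ∃ c₁ : ℝ, 0 < c₁ ∧ 0 < φ c₁ := by
    have hT := hasDerivAt_iff_tendsto_slope.mp hd
    have hev : ∀ᶠ c in nhdsWithin (0:ℝ) {(0:ℝ)}ᶜ, 0 < slope φ 0 c :=
      hT.eventually (eventually_gt_nhds hd0)
    have hev' : ∀ᶠ c in nhdsWithin (0:ℝ) (Set.Ioi 0), 0 < slope φ 0 c :=
      hev.filter_mono (nhdsWithin_mono 0 (fun x hx => ne_of_gt hx))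
    have hmem : ∀ᶠ c in nhdsWithin (0:ℝ) (Set.Ioi 0), c ∈ Set.Ioi (0:ℝ) :=
      self_mem_nhdsWithin
    obtain ⟨c, hc1, hc2⟩ := (hev'.and hmem).exists
    refine ⟨c, hc2, ?_⟩
    rw [slope_def_field, hφ0, sub_zero, sub_zero] at hc1
    have := mul_pos hc1 (show (0:ℝ) < c from hc2)
    rwa [div_mul_cancel₀ _ (ne_of_gt hc2)] at this
  -- φ is eventually negative
  set T : ℝ := (Real.log (m/(p*a)) + 1)/(m-a) with hT
  have hneg : ∀ c, T ≤ c → φ c < 0 := by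
    intro c hc
    have h1 : Real.log (m/(p*a)) + 1 ≤ (m-a)*c := by
      have h0 := mul_le_mul_of_nonneg_right hc hα.le
      rw [hT, div_mul_cancel₀ _ hα.ne'] at h0
      linarith
    have hmpa : 0 < m/(p*a) := div_pos hm0 (by positivity)
    have h2 : m / (p*a) * Real.exp 1 ≤ Real.exp ((m-a)*c) := by
      calc m/(p*a) * Real.exp 1 = Real.exp (Real.log (m/(p*a)) + 1) := by
            rw [Real.exp_add, Real.exp_log hmpa]
        _ ≤ Real.exp ((m-a)*c) := Real.exp_le_exp.mpr h1
    have h3 : m * Real.exp 1 ≤ p*a*Real.exp ((m-a)*c) := by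
      have := mul_le_mul_of_nonneg_left h2 (by positivity : (0:ℝ) ≤ p*a)
      calc m * Real.exp 1 = p*a*(m/(p*a) * Real.exp 1) := by field_simp
        _ ≤ p*a*Real.exp ((m-a)*c) := this
    have he1 : (1:ℝ) < Real.exp 1 := by
      have := Real.add_one_lt_exp (x := 1) one_ne_zero; linarith
    have hqb : 0 < q*b*Real.exp ((m-b)*c) := by positivity
    simp only [hφ]
    nlinarith
  set C : ℝ := max (c₁+1) T with hC
  have hφC : φ C < 0 := hneg C (le_max_right _ _)
  have hc₁C : c₁ ≤ C := by
    have := le_max_left (c₁+1) T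
    simp only [← hC] at this; linarith
  -- IVT
  have hcont : Continuous φ := by
    apply Continuous.sub
    apply Continuous.sub continuous_const
    · exact continuous_const.mul (Real.continuous_exp.comp (continuous_const.mul continuous_id))
    · exact continuous_const.mul (Real.continuous_exp.comp (continuous_const.mul continuous_id))
  obtain ⟨c₀, hc₀mem, hφc₀⟩ : ∃ c₀ ∈ Set.Icc c₁ C, φ c₀ = 0 := by
    have := intermediate_value_Icc' hc₁C hcont.continuousOn
    have h0mem : (0:ℝ) ∈ Set.Icc (φ C) (φ c₁) := ⟨hφC.le, hφc₁.le⟩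
    obtain ⟨c₀, hmem, heq⟩ := this h0mem
    exact ⟨c₀, hmem, heq⟩
  have hc₀pos : 0 < c₀ := lt_of_lt_of_le hc₁pos hc₀mem.1
  -- sign facts for φ
  have φpos : ∀ c, 0 < c → c < c₀ → 0 < φ c := by
    intro c hc hcc₀
    have hsum : (c₀-c)/c₀ + c/c₀ = 1 := by field_simp; ring
    have := key 0 c₀ ((c₀-c)/c₀) (c/c₀) hc₀pos
      (div_pos (by linarith) hc₀pos) (by positivity) hsum
    rw [hφ0, hφc₀] at this
    have harg : (c₀-c)/c₀*0 + c/c₀*c₀ = c := by field_simp; ring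
    rw [harg] at this
    simp only [mul_zero, add_zero, zero_add] at this
    linarith
  have φneg : ∀ c, c₀ < c → φ c < 0 := by
    intro c hcc
    have hc : 0 < c := hc₀pos.trans hcc
    have hsum : (c-c₀)/c + c₀/c = 1 := by field_simp; ring
    have := key 0 c ((c-c₀)/c) (c₀/c) hc (div_pos (by linarith) hc) (by positivity) hsum
    rw [hφ0] at this
    have harg : (c-c₀)/c*0 + c₀/c*c = c₀ := by field_simp; ring
    rw [harg, hφc₀] at this
    simp only [mul_zero, zero_add] at this
    have hmu : 0 < c₀/c := by positivity
    by_contra hcon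
    push_neg at hcon
    nlinarith [mul_nonneg hmu.le hcon]
  -- express D via φ
  have hD : ∀ γ : ℝ, m * Real.exp (-m * γ / η)
      - p*(a * Real.exp (-a * γ / η)) - q*(b * Real.exp (-b * γ / η))
      = Real.exp (-m * γ / η) * φ (γ/η) := by
    intro γ
    simp only [hφ]
    have e1 : Real.exp (-m*γ/η) * Real.exp ((m-a)*(γ/η)) = Real.exp (-a*γ/η) := by
      rw [← Real.exp_add]; congr 1; field_simp; ring
    have e2 : Real.exp (-m*γ/η) * Real.exp ((m-b)*(γ/η)) = Real.exp (-b*γ/η) := by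
      rw [← Real.exp_add]; congr 1; field_simp; ring
    linear_combination (p*a)*e1 + (q*b)*e2
  refine ⟨η * c₀, by positivity, ?_, ?_⟩
  · intro γ hγ hγle
    rw [hD γ]
    have hcle : γ/η ≤ c₀ := by rw [div_le_iff₀ hη]; linarith [mul_comm c₀ η]
    rcases lt_or_eq_of_le hcle with h | h
    · exact mul_nonneg (exp_pos _).le (φpos (γ/η) (by positivity) h).le
    · rw [h, hφc₀, mul_zero]
  · intro γ hγge
    rw [hD γ]
    have hcge : c₀ ≤ γ/η := by rw [le_div_iff₀ hη]; linarith [mul_comm c₀ η]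
    rcases lt_or_eq_of_le hcge with h | h
    · exact mul_nonpos_of_nonneg_of_nonpos (exp_pos _).le (φneg (γ/η) h).le
    · rw [← h, hφc₀, mul_zero]
lemma mainIneq {η : ℝ} {w : ℝ → ℝ} (hη : 0 < η)
    (hw : AntitoneOn w (Set.Ioi 0))
    (hwpos : ∀ γ ∈ Set.Ioi (0 : ℝ), 0 < w γ)
    (hint : IntegrableOn (fun γ => w γ / (1 + γ)) (Set.Ioi 0))
    {a b p q : ℝ} (ha : 0 < a) (hab : a < b) (hp : 0 < p) (hq : 0 < q) (hpq : p + q = 1) :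
    p * (a * ∫ γ in Set.Ioi (0:ℝ), w γ * Real.exp (-a * γ / η) / (1 + γ))
      + q * (b * ∫ γ in Set.Ioi (0:ℝ), w γ * Real.exp (-b * γ / η) / (1 + γ))
      < (p*a+q*b) * ∫ γ in Set.Ioi (0:ℝ), w γ * Real.exp (-(p*a+q*b) * γ / η) / (1 + γ) := by
  have hb : 0 < b := ha.trans hab
  set m : ℝ := p*a+q*b with hm
  have hm0 : 0 < m := by positivity
  obtain ⟨γ₀, hγ₀pos, hcross1, hcross2⟩ := crossing hη ha hab hp hq hpq
  have hγ₀mem : γ₀ ∈ Set.Ioi (0:ℝ) := hγ₀pos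
  set w₀ : ℝ := w γ₀ with hw₀
  have hw₀pos : 0 < w₀ := hwpos γ₀ hγ₀mem
  -- representation: β * ∫ = ∫ of scaled integrand
  have hrep : ∀ β : ℝ, β * (∫ γ in Set.Ioi (0:ℝ), w γ * Real.exp (-β*γ/η) / (1+γ))
      = ∫ γ in Set.Ioi (0:ℝ), w γ * (β * Real.exp (-β*γ/η)) / (1+γ) := by
    intro β
    rw [← integral_const_mul]
    exact setIntegral_congr_fun measurableSet_Ioi (fun γ _ => by ring)
  -- integrability of scaled weighted integrands
  have hIB : ∀ β : ℝ, 0 < β → IntegrableOn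
      (fun γ => w γ * (β * Real.exp (-β*γ/η)) / (1+γ)) (Set.Ioi 0) := by
    intro β hβ
    exact IntegrableOn.congr_fun ((intB hη hβ hwpos hint).const_mul β)
      (fun γ _ => by ring) measurableSet_Ioi
  -- integrability of scaled unweighted integrands
  have hIA : ∀ β : ℝ, 0 < β → IntegrableOn
      (fun γ => β * (Real.exp (-β*γ/η) / (1+γ))) (Set.Ioi 0) :=
    fun β hβ => (intA hη hβ).const_mul β
  have hsumA : IntegrableOn (fun γ => p * (a * (Real.exp (-a*γ/η)/(1+γ)))
      + q * (b * (Real.exp (-b*γ/η)/(1+γ)))) (Set.Ioi 0) :=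
    ((hIA a ha).const_mul p).add ((hIA b hb).const_mul q)
  have hsumB : IntegrableOn (fun γ => p * (w γ * (a * Real.exp (-a*γ/η)) / (1+γ))
      + q * (w γ * (b * Real.exp (-b*γ/η)) / (1+γ))) (Set.Ioi 0) :=
    ((hIB a ha).const_mul p).add ((hIB b hb).const_mul q)
  -- G2 pieces
  have hG2inner : IntegrableOn (fun γ => m * (Real.exp (-m*γ/η)/(1+γ))
      - (p * (a * (Real.exp (-a*γ/η)/(1+γ))) + q * (b * (Real.exp (-b*γ/η)/(1+γ)))))
      (Set.Ioi 0) :=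
    (hIA m hm0).sub hsumA
  have hG2int : IntegrableOn (fun γ => w₀ * (m * (Real.exp (-m*γ/η)/(1+γ))
      - (p * (a * (Real.exp (-a*γ/η)/(1+γ))) + q * (b * (Real.exp (-b*γ/η)/(1+γ))))))
      (Set.Ioi 0) := hG2inner.const_mul w₀
  have hFint : IntegrableOn (fun γ => w γ * (m * Real.exp (-m*γ/η)) / (1+γ)
      - (p * (w γ * (a * Real.exp (-a*γ/η)) / (1+γ)) + q * (w γ * (b * Real.exp (-b*γ/η)) / (1+γ))))
      (Set.Ioi 0) :=
    (hIB m hm0).sub hsumB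
  have hG1int : IntegrableOn (fun γ => (w γ - w₀) * ((m * Real.exp (-m*γ/η)
      - p*(a * Real.exp (-a*γ/η)) - q*(b * Real.exp (-b*γ/η))) / (1+γ))) (Set.Ioi 0) :=
    IntegrableOn.congr_fun (hFint.sub hG2int)
      (fun γ _ => by simp only [Pi.sub_apply]; ring) measurableSet_Ioi
  -- split
  have hsplit : ∫ γ in Set.Ioi (0:ℝ), (w γ * (m * Real.exp (-m*γ/η)) / (1+γ)
        - (p * (w γ * (a * Real.exp (-a*γ/η)) / (1+γ)) + q * (w γ * (b * Real.exp (-b*γ/η)) / (1+γ))))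
      = (∫ γ in Set.Ioi (0:ℝ), (w γ - w₀) * ((m * Real.exp (-m*γ/η)
          - p*(a * Real.exp (-a*γ/η)) - q*(b * Real.exp (-b*γ/η))) / (1+γ)))
        + ∫ γ in Set.Ioi (0:ℝ), w₀ * (m * (Real.exp (-m*γ/η)/(1+γ))
          - (p * (a * (Real.exp (-a*γ/η)/(1+γ))) + q * (b * (Real.exp (-b*γ/η)/(1+γ))))) := by
    rw [← integral_add hG1int hG2int]
    exact setIntegral_congr_fun measurableSet_Ioi (fun γ _ => by ring)
  -- first piece nonneg
  have hG1nonneg : 0 ≤ ∫ γ in Set.Ioi (0:ℝ), (w γ - w₀) * ((m * Real.exp (-m*γ/η)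
      - p*(a * Real.exp (-a*γ/η)) - q*(b * Real.exp (-b*γ/η))) / (1+γ)) := by
    refine setIntegral_nonneg measurableSet_Ioi (fun γ hγ => ?_)
    have hγ0 : (0:ℝ) < γ := hγ
    have h1γ : (0:ℝ) < 1 + γ := by linarith
    rcases le_total γ γ₀ with hle | hge
    · have hD := hcross1 γ hγ0 hle
      have hwge : w₀ ≤ w γ := hw hγ hγ₀mem hle
      exact mul_nonneg (by linarith) (div_nonneg hD h1γ.le)
    · have hD := hcross2 γ hge
      have hwle' : w γ ≤ w₀ := hw hγ₀mem hγ hge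
      have h2 := mul_nonneg (neg_nonneg.mpr (show w γ - w₀ ≤ 0 by linarith))
        (neg_nonneg.mpr (div_nonpos_of_nonpos_of_nonneg hD h1γ.le))
      rwa [neg_mul_neg] at h2
  -- second piece positive
  have hG2pos : 0 < ∫ γ in Set.Ioi (0:ℝ), w₀ * (m * (Real.exp (-m*γ/η)/(1+γ))
      - (p * (a * (Real.exp (-a*γ/η)/(1+γ))) + q * (b * (Real.exp (-b*γ/η)/(1+γ))))) := by
    rw [integral_const_mul]
    refine mul_pos hw₀pos ?_
    rw [integral_sub (hIA m hm0) hsumA,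
      integral_add ((hIA a ha).const_mul p) ((hIA b hb).const_mul q),
      integral_const_mul p, integral_const_mul q]
    have := lemF hη ha hb hab.ne hp hq hpq
    rw [← hm] at this
    linarith
  -- assemble
  have htot : 0 < ∫ γ in Set.Ioi (0:ℝ), (w γ * (m * Real.exp (-m*γ/η)) / (1+γ)
      - (p * (w γ * (a * Real.exp (-a*γ/η)) / (1+γ)) + q * (w γ * (b * Real.exp (-b*γ/η)) / (1+γ)))) := by
    rw [hsplit]; linarith
  rw [integral_sub (hIB m hm0) hsumB,
    integral_add ((hIB a ha).const_mul p) ((hIB b hb).const_mul q),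
    integral_const_mul p, integral_const_mul q] at htot
  rw [hrep a, hrep b, hrep m]
  linarith

theorem stmt_11 (η : ℝ) (hη : 0 < η) (w : ℝ → ℝ)
    (hw : AntitoneOn w (Set.Ioi 0))
    (hwpos : ∀ γ ∈ Set.Ioi (0 : ℝ), 0 < w γ)
    (hwle : ∀ γ ∈ Set.Ioi (0 : ℝ), w γ ≤ 1)
    (hint : IntegrableOn (fun γ => w γ / (1 + γ)) (Set.Ioi 0)) :
    StrictConcaveOn ℝ (Set.Ioi 0)
      (fun β : ℝ => β * ∫ γ in Set.Ioi (0 : ℝ), w γ * Real.exp (-β * γ / η) / (1 + γ)) := by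
  refine ⟨convex_Ioi 0, ?_⟩
  intro x hx y hy hxy pp qq hpp hqq hppqq
  simp only [smul_eq_mul]
  have hx0 : (0:ℝ) < x := hx
  have hy0 : (0:ℝ) < y := hy
  rcases lt_or_gt_of_ne hxy with h | h
  · exact mainIneq hη hw hwpos hint hx0 h hpp hqq hppqq
  · have key := mainIneq hη hw hwpos hint hy0 h hqq hpp (by linarith)
    have harg : qq*y+pp*x = pp*x+qq*y := by ring
    rw [harg] at key
    show pp * (x * ∫ γ in Set.Ioi (0:ℝ), w γ * Real.exp (-x * γ / η) / (1 + γ))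
        + qq * (y * ∫ γ in Set.Ioi (0:ℝ), w γ * Real.exp (-y * γ / η) / (1 + γ))
      < (pp*x+qq*y) * ∫ γ in Set.Ioi (0:ℝ), w γ * Real.exp (-(pp*x+qq*y) * γ / η) / (1 + γ)
    linarith
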